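/- Let d = det(M) where M is the n×n matrix with entries M_{k,i} = ∂s_k/∂ξ_{in}. Then for a = (a_1, …, a_n) ∈ K^n and the companion-type matrix x_a, one has d(x_a) = 1. -/

import Mathlib

open MvPolynomial Equiv Matrix

/-- `s_k = tr(∧^k X)`: the sum of all `k × k` principal minors of the generic `n × n`
matrix, as a polynomial in `K[ξ_{ij}]`. -/
noncomputable def sPolyK (K : Type*) [CommRing K] (n k : ℕ) :
    MvPolynomial (Fin n × Fin n) K :=
  ∑ Λ ∈ (Finset.univ.powersetCard k : Finset (Finset (Fin n))),
    Matrix.det (Matrix.of fun i j : Λ => X ((i : Fin n), (j : Fin n)))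

/-- `d = det M` where `M` is the `n × n` matrix with entries `M_{k,i} = ∂s_k/∂ξ_{in}`. -/
noncomputable def dPoly (K : Type*) [CommRing K] (n : ℕ) (hn : 1 ≤ n) :
    MvPolynomial (Fin n × Fin n) K :=
  Matrix.det (Matrix.of fun k i : Fin n =>
    pderiv (i, (⟨n - 1, by omega⟩ : Fin n)) (sPolyK K n ((k : ℕ) + 1)))

/-- The companion-type matrix `x_a` attached to `a = (a_1, …, a_n)` (here `a k = a_{k+1}`):
subdiagonal entries `1`, last column `(a_n, a_{n-1}, …, a_1)ᵀ`, zeros elsewhere. -/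
def companionX {K : Type*} [Field K] {n : ℕ} (a : Fin n → K) :
    Matrix (Fin n) (Fin n) K :=
  Matrix.of fun i j =>
    if h : (j : ℕ) = n - 1 then a ⟨n - 1 - (i : ℕ), by omega⟩
    else if (i : ℕ) = (j : ℕ) + 1 then 1 else 0




theorem my_pderiv_prod {σ K ι : Type*} [CommRing K] [DecidableEq σ] [DecidableEq ι] (v : σ)
    (s : Finset ι) (f : ι → MvPolynomial σ K) :
    pderiv v (∏ i ∈ s, f i) = ∑ i ∈ s, (∏ j ∈ s.erase i, f j) * pderiv v (f i) := by
  induction s using Finset.induction_on with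
  | empty => simp
  | insert x s hx ih =>
    rw [Finset.prod_insert hx, pderiv_mul, ih, Finset.sum_insert hx,
      Finset.erase_insert hx]
    congr 1
    · ring
    · rw [Finset.mul_sum]
      apply Finset.sum_congr rfl
      intro i hi
      rw [Finset.erase_insert_of_ne (by rintro rfl; exact hx hi),
        Finset.prod_insert (by simp [hx])]
      ring

theorem my_pderiv_det {σ K : Type*} {m : Type*} [Fintype m] [DecidableEq m]
    [CommRing K] [DecidableEq σ] (v : σ) (A : Matrix m m (MvPolynomial σ K)) :
    pderiv v A.det = ∑ j, (A.updateCol j fun i => pderiv v (A i j)).det := by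
  simp only [Matrix.det_apply]
  rw [map_sum]
  have step : ∀ σ' : Equiv.Perm m, pderiv v (Equiv.Perm.sign σ' • ∏ i, A (σ' i) i)
      = ∑ j, Equiv.Perm.sign σ' • ((∏ i ∈ Finset.univ.erase j, A (σ' i) i) * pderiv v (A (σ' j) j)) := by
    intro σ'
    simp only [Units.smul_def]
    rw [← Finset.smul_sum,
      map_zsmul (pderiv v : Derivation K (MvPolynomial σ K) (MvPolynomial σ K)),
      my_pderiv_prod]
  simp_rw [step]
  rw [Finset.sum_comm]
  apply Finset.sum_congr rfl
  intro j _
  apply Finset.sum_congr rfl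
  intro σ' _
  congr 1
  rw [← Finset.prod_erase_mul _ _ (Finset.mem_univ j)]
  congr 1
  · apply Finset.prod_congr rfl
    intro i hi
    rw [Matrix.updateCol_apply, if_neg (Finset.ne_of_mem_erase hi)]
  · rw [Matrix.updateCol_apply, if_pos rfl]

/-- The cyclic "companion cofactor" matrix has determinant `(-1)^c`. -/
theorem det_cyclic (K : Type*) [Field K] (c : ℕ) :
    Matrix.det (Matrix.of fun r t : Fin (c+1) =>
      if (t:ℕ) = c then (if (r:ℕ) = 0 then (1:K) else 0)
      else if (r:ℕ) = (t:ℕ)+1 then 1 else 0) = (-1)^c := by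
  have hmat : (Matrix.of fun r t : Fin (c+1) =>
      if (t:ℕ) = c then (if (r:ℕ) = 0 then (1:K) else 0)
      else if (r:ℕ) = (t:ℕ)+1 then 1 else 0)
      = ((finRotate (c+1)).permMatrix K)ᵀ := by
    ext r t
    rw [Matrix.transpose_apply, Equiv.Perm.permMatrix, PEquiv.toMatrix_toPEquiv_eq, Matrix.submatrix_apply, id_eq,
      Matrix.one_apply, finRotate_succ_apply, Matrix.of_apply]
    by_cases ht : (t:ℕ) = c
    · rw [if_pos ht]
      have h1 : t + 1 = 0 := by
        ext; rw [Fin.val_add_one]; simp [Fin.ext_iff, ht]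
      rw [h1]
      by_cases hr : (r:ℕ) = 0
      · rw [if_pos hr, if_pos (by ext; simp [hr])]
      · rw [if_neg hr, if_neg (by simp [Fin.ext_iff]; omega)]
    · rw [if_neg ht]
      have h1 : ((t + 1 : Fin (c+1)) : ℕ) = (t:ℕ) + 1 := by
        rw [Fin.val_add_one, if_neg (by simp [Fin.ext_iff]; omega)]
      by_cases hr : (r:ℕ) = (t:ℕ)+1
      · rw [if_pos hr, if_pos (by ext; simp [h1, hr])]
      · rw [if_neg hr, if_neg (by simp [Fin.ext_iff]; omega)]
  rw [hmat, Matrix.det_transpose, Matrix.det_permutation, sign_finRotate]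
  push_cast
  norm_num

theorem sign_revPerm : ∀ n : ℕ, Perm.sign (Fin.revPerm : Perm (Fin n)) = (-1)^(n*(n-1)/2)
  | 0 => by decide
  | (n+1) => by
    let f : Fin n ≃ {x : Fin (n+1) // x ≠ Fin.last n} :=
      { toFun := fun i => ⟨i.castSucc, by simp [Fin.ext_iff]; omega⟩
        invFun := fun x => ⟨(x:Fin (n+1)).val, by
          have := (x:Fin (n+1)).isLt
          have hne : ((x:Fin (n+1)).val : ℕ) ≠ n := fun h => x.2 (Fin.ext (by simpa using h))
          omega⟩
        left_inv := fun i => by simp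
        right_inv := fun x => by ext; simp }
    have key : (Fin.revPerm : Perm (Fin (n+1)))
        = finRotate (n+1) * (Fin.revPerm : Perm (Fin n)).extendDomain f := by
      apply Equiv.ext
      intro x
      induction x using Fin.lastCases with
      | last =>
        simp only [Perm.mul_apply]
        rw [Perm.extendDomain_apply_not_subtype _ f (by simp)]
        ext
        simp [Fin.val_rev]
      | cast j =>
        simp only [Perm.mul_apply]
        rw [Perm.extendDomain_apply_subtype _ f (by simp [Fin.ext_iff]; omega)]
        have hsymm : f.symm ⟨j.castSucc, by simp [Fin.ext_iff]; omega⟩ = j := by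
          apply f.injective; ext; simp [f]
        rw [hsymm]
        have h2 : ((f (Fin.revPerm j)) : Fin (n+1)) = (Fin.rev j).castSucc := by simp [f]
        rw [h2, finRotate_succ_apply]
        have hj := j.isLt
        ext
        rw [Fin.val_add_one, if_neg (by simp [Fin.ext_iff, Fin.val_rev]; omega)]
        simp [Fin.val_rev]
        omega
    rw [key, _root_.map_mul, sign_finRotate, Perm.sign_extendDomain, sign_revPerm n, ← pow_add]
    congr 1
    have h1 := Finset.sum_range_id n
    have h2 := Finset.sum_range_id (n+1)
    rw [Finset.sum_range_succ, h1] at h2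
    omega

/-- The "cofactor" matrix obtained from differentiating the minor on `Λ` w.r.t. `(i, last)`
and evaluating at the companion matrix. -/
def Bmat (K : Type*) [Field K] {n : ℕ} (i : Fin n) (Λ : Finset (Fin n)) :
    Matrix Λ Λ K :=
  Matrix.of fun r c =>
    if ((c : Fin n) : ℕ) = n - 1 then (if (r : Fin n) = i then 1 else 0)
    else if ((r : Fin n) : ℕ) = ((c : Fin n) : ℕ) + 1 then 1 else 0

theorem eval_pderiv_minor {K : Type*} [Field K] {n : ℕ} (hn : 1 ≤ n) (a : Fin n → K)
    (i : Fin n) (Λ : Finset (Fin n)) :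
    eval (fun p : Fin n × Fin n => companionX a p.1 p.2)
      (pderiv (i, (⟨n - 1, by omega⟩ : Fin n))
        (Matrix.det (Matrix.of fun r c : Λ => X ((r : Fin n), (c : Fin n)))))
    = if (⟨n - 1, by omega⟩ : Fin n) ∈ Λ then (Bmat K i Λ).det else 0 := by
  classical
  set last : Fin n := ⟨n - 1, by omega⟩ with hlast
  rw [my_pderiv_det, map_sum]
  have hzero : ∀ j : Λ, (j : Fin n) ≠ last →
      eval (fun p : Fin n × Fin n => companionX a p.1 p.2)
        (((Matrix.of fun r c : Λ => X ((r : Fin n), (c : Fin n))).updateCol j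
          fun r => pderiv (i, last) (X ((r : Fin n), (j : Fin n)))).det) = 0 := by
    intro j hj
    rw [RingHom.map_det, RingHom.mapMatrix_apply]
    apply Matrix.det_eq_zero_of_column_eq_zero j
    intro r
    rw [Matrix.map_apply, Matrix.updateCol_apply, if_pos rfl,
      pderiv_X_of_ne (by simp [Prod.ext_iff]; intro _; exact hj), _root_.map_zero]
  by_cases h : last ∈ Λ
  · rw [if_pos h]
    rw [Finset.sum_eq_single (⟨last, h⟩ : Λ)]
    · rw [RingHom.map_det]
      congr 1
      ext r c
      simp only [RingHom.mapMatrix_apply, Matrix.map_apply, Matrix.updateCol_apply, Bmat,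
        Matrix.of_apply]
      by_cases hc : c = (⟨last, h⟩ : Λ)
      · subst hc
        rw [if_pos rfl, if_pos (show ((⟨last, h⟩ : Λ) : Fin n).val = n - 1 from rfl)]
        by_cases hr : (r : Fin n) = i
        · rw [show ((r : Fin n), ((⟨last, h⟩ : Λ) : Fin n)) = (i, last) from
            Prod.ext hr rfl, pderiv_X_self, _root_.map_one, if_pos hr]
        · rw [pderiv_X_of_ne (by simp [Prod.ext_iff, hr]), _root_.map_zero, if_neg hr]
      · have hcv : ((c : Fin n) : ℕ) ≠ n - 1 := by
          intro hv
          exact hc (Subtype.ext (Fin.ext hv))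
        rw [if_neg hc, if_neg hcv, eval_X]
        show companionX a (r : Fin n) (c : Fin n) = _
        rw [companionX, Matrix.of_apply, dif_neg hcv]
    · intro j _ hj
      apply hzero
      intro hv
      exact hj (Subtype.ext hv)
    · intro hmem
      exact absurd (Finset.mem_univ _) hmem
  · rw [if_neg h]
    apply Finset.sum_eq_zero
    intro j _
    apply hzero
    intro hv
    exact h (hv ▸ j.2)


theorem det_Bmat {K : Type*} [Field K] {n : ℕ} (hn : 1 ≤ n) (i : Fin n) (Λ : Finset (Fin n))
    (hl : (⟨n - 1, by omega⟩ : Fin n) ∈ Λ) :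
    (Bmat K i Λ).det =
      if Λ = Finset.univ.filter (fun x : Fin n => (i : ℕ) ≤ (x : ℕ))
      then (-1 : K) ^ (n - 1 - (i : ℕ)) else 0 := by
  classical
  by_cases hI : Λ = Finset.univ.filter (fun x : Fin n => (i : ℕ) ≤ (x : ℕ))
  · rw [if_pos hI]
    subst hI
    have him : i ∈ Finset.univ.filter (fun x : Fin n => (i : ℕ) ≤ (x : ℕ)) := by
      simp
    obtain ⟨c, hc⟩ : ∃ c, n - (i : ℕ) = c + 1 := ⟨n - (i : ℕ) - 1, by have := i.isLt; omega⟩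
    have hiv := i.isLt
    let e : Fin (c + 1) ≃ {x // x ∈ Finset.univ.filter (fun x : Fin n => (i : ℕ) ≤ (x : ℕ))} :=
      { toFun := fun t => ⟨⟨(i : ℕ) + (t : ℕ), by have := t.isLt; omega⟩, by
          simp only [Finset.mem_filter, Finset.mem_univ, true_and]
          exact Nat.le_add_right _ _⟩
        invFun := fun x => ⟨((x : Fin n) : ℕ) - (i : ℕ), by
          have h1 := (Finset.mem_filter.mp x.2).2
          have h2 := (x : Fin n).isLt
          omega⟩
        left_inv := fun t => by ext; simp
        right_inv := fun x => by
          have h1 := (Finset.mem_filter.mp x.2).2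
          ext
          simp
          omega }
    rw [← Matrix.det_submatrix_equiv_self e]
    have key : (Bmat K i _).submatrix e e = Matrix.of fun r t : Fin (c+1) =>
        if (t:ℕ) = c then (if (r:ℕ) = 0 then (1:K) else 0)
        else if (r:ℕ) = (t:ℕ)+1 then 1 else 0 := by
      ext r t
      have her : (((e r : _) : Fin n) : ℕ) = (i : ℕ) + (r : ℕ) := rfl
      have het : (((e t : _) : Fin n) : ℕ) = (i : ℕ) + (t : ℕ) := rfl
      simp only [Matrix.submatrix_apply, Bmat, Matrix.of_apply, Fin.ext_iff, her, het]
      have hrlt := r.isLt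
      have htlt := t.isLt
      split_ifs <;> first | rfl | omega
    rw [key, det_cyclic]
    congr 1
    omega
  · rw [if_neg hI]
    by_cases ha : i ∈ Λ
    swap
    · apply Matrix.det_eq_zero_of_column_eq_zero (⟨⟨n - 1, by omega⟩, hl⟩ : Λ)
      intro r
      show (if ((⟨n - 1, by omega⟩ : Fin n) : ℕ) = n - 1 then _ else _) = (0:K)
      rw [if_pos rfl, if_neg (by rintro rfl; exact ha r.2)]
    by_cases hb : ∀ x ∈ Λ, ∀ (h1 : (x : Fin n).val ≠ n - 1) (h2 : (x:ℕ) + 1 < n),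
        (⟨(x:ℕ) + 1, h2⟩ : Fin n) ∈ Λ
    swap
    · push_neg at hb
      obtain ⟨x, hx, hx1, hx2, hx3⟩ := hb
      apply Matrix.det_eq_zero_of_column_eq_zero (⟨x, hx⟩ : Λ)
      intro r
      show (if (x : ℕ) = n - 1 then _ else _) = (0:K)
      rw [if_neg hx1, if_neg]
      intro hr
      exact hx3 (by
        have : (r : Fin n) = ⟨(x:ℕ)+1, hx2⟩ := Fin.ext hr
        exact this ▸ r.2)
    by_cases hd : ∀ x ∈ Λ, (x : Fin n).val ≠ n - 1 → (x:ℕ) + 1 ≠ (i:ℕ)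
    swap
    · push_neg at hd
      obtain ⟨x, hx, hx1, hx2⟩ := hd
      apply Matrix.det_zero_of_column_eq
        (show (⟨x, hx⟩ : Λ) ≠ ⟨⟨n - 1, by omega⟩, hl⟩ by
          intro h
          exact hx1 (by simpa [Subtype.ext_iff, Fin.ext_iff] using h))
      intro r
      show (if (x:ℕ) = n - 1 then _ else _) = (if ((⟨n-1, by omega⟩ : Fin n) : ℕ) = n - 1 then _ else _)
      rw [if_neg hx1, if_pos rfl]
      congr 1
      simp only [eq_iff_iff]
      rw [Fin.ext_iff]
      omega
    -- now derive the contradiction: Λ must be the interval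
    exfalso
    apply hI
    have hup : ∀ x ∈ Λ, ∀ m, (x : Fin n).val ≤ m → ∀ (hm : m < n), (⟨m, hm⟩ : Fin n) ∈ Λ := by
      intro x hx m hm
      induction m, hm using Nat.le_induction with
      | base => intro _; simpa using hx
      | succ m hm ih =>
        intro hsm
        have h1 : m < n := by omega
        have h2 := ih h1
        have h3 : ((⟨m, h1⟩ : Fin n) : ℕ) ≠ n - 1 := by simp; omega
        exact hb ⟨m, h1⟩ h2 h3 hsm
    ext x
    simp only [Finset.mem_filter, Finset.mem_univ, true_and]
    constructor
    · intro hx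
      by_contra hlt
      push_neg at hlt
      have hi1 : 1 ≤ (i : ℕ) := by omega
      have hc1 : (i : ℕ) - 1 < n := by omega
      have hcA : (⟨(i:ℕ) - 1, hc1⟩ : Fin n) ∈ Λ := hup x hx ((i:ℕ) - 1) (by omega) hc1
      have hcne : ((⟨(i:ℕ) - 1, hc1⟩ : Fin n) : ℕ) ≠ n - 1 := by
        simp
        have := i.isLt
        omega
      exact hd _ hcA hcne (by simp; omega)
    · intro hx
      have := hup i ha (x : ℕ) hx x.isLt
      simpa using this

theorem entry_eval {K : Type*} [Field K] {n : ℕ} (hn : 1 ≤ n) (a : Fin n → K) (k i : Fin n) :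
    eval (fun p : Fin n × Fin n => companionX a p.1 p.2)
      (pderiv (i, (⟨n - 1, by omega⟩ : Fin n)) (sPolyK K n ((k : ℕ) + 1)))
    = if (i : ℕ) = n - 1 - (k : ℕ) then (-1 : K) ^ (k : ℕ) else 0 := by
  classical
  have hcard : ∀ m : ℕ, (Finset.univ.filter (fun x : Fin n => m ≤ (x : ℕ))).card = n - m := by
    intro m
    by_cases hm : m < n
    · have he : Finset.univ.filter (fun x : Fin n => m ≤ (x : ℕ))
          = Finset.Ici (⟨m, hm⟩ : Fin n) := by
        ext x
        simp [Finset.mem_Ici, Fin.le_def]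
      rw [he, Fin.card_Ici]
    · have he : Finset.univ.filter (fun x : Fin n => m ≤ (x : ℕ)) = ∅ := by
        ext x
        have := x.isLt
        simp
        omega
      rw [he]
      simp
      omega
  have hk := k.isLt
  have hi := i.isLt
  rw [sPolyK, map_sum, map_sum]
  by_cases hik : (i : ℕ) = n - 1 - (k : ℕ)
  · rw [if_pos hik]
    set Ik := Finset.univ.filter (fun x : Fin n => (i : ℕ) ≤ (x : ℕ)) with hIk
    have hIkcard : Ik.card = (k : ℕ) + 1 := by rw [hIk, hcard]; omega
    have hIkmem : Ik ∈ (Finset.univ.powersetCard ((k : ℕ) + 1) : Finset (Finset (Fin n))) := by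
      rw [Finset.mem_powersetCard]
      exact ⟨Finset.subset_univ _, hIkcard⟩
    have hlastIk : (⟨n - 1, by omega⟩ : Fin n) ∈ Ik := by
      rw [hIk]
      simp only [Finset.mem_filter, Finset.mem_univ, true_and]
      omega
    rw [Finset.sum_eq_single_of_mem Ik hIkmem]
    · rw [eval_pderiv_minor hn, if_pos hlastIk, det_Bmat hn _ _ hlastIk, if_pos rfl]
      congr 1
      omega
    · intro Λ _ hne
      rw [eval_pderiv_minor hn]
      by_cases hlast : (⟨n - 1, by omega⟩ : Fin n) ∈ Λ
      · rw [if_pos hlast, det_Bmat hn _ _ hlast, if_neg (by rw [← hIk]; exact hne)]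
      · rw [if_neg hlast]
  · rw [if_neg hik]
    apply Finset.sum_eq_zero
    intro Λ hΛ
    rw [eval_pderiv_minor hn]
    by_cases hlast : (⟨n - 1, by omega⟩ : Fin n) ∈ Λ
    · rw [if_pos hlast, det_Bmat hn _ _ hlast, if_neg]
      intro hEq
      have h1 : Λ.card = (k : ℕ) + 1 := (Finset.mem_powersetCard.mp hΛ).2
      rw [hEq, hcard] at h1
      omega
    · rw [if_neg hlast]


/-- for every `a ∈ K^n`, evaluating `d` at the companion-type matrix `x_a`
gives `d(x_a) = 1`. -/
theorem stmt11 (K : Type*) [Field K] (n : ℕ) (hn : 1 ≤ n) (a : Fin n → K) :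
    eval (fun p : Fin n × Fin n => companionX a p.1 p.2) (dPoly K n hn) = 1 := by
  classical
  rw [dPoly, RingHom.map_det, RingHom.mapMatrix_apply]
  have hN : ((Matrix.of fun k i : Fin n =>
        pderiv (i, (⟨n - 1, by omega⟩ : Fin n)) (sPolyK K n ((k : ℕ) + 1))).map
          (eval (fun p : Fin n × Fin n => companionX a p.1 p.2)))
      = Matrix.diagonal (fun k : Fin n => (-1 : K) ^ (k : ℕ)) * (Fin.revPerm.permMatrix K) := by
    ext k i
    rw [Matrix.map_apply, Matrix.of_apply, entry_eval hn, Matrix.diagonal_mul,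
      Equiv.Perm.permMatrix, PEquiv.toMatrix_toPEquiv_eq, Matrix.submatrix_apply, id_eq, Matrix.one_apply]
    have hk := k.isLt
    have hi := i.isLt
    by_cases h : (i : ℕ) = n - 1 - (k : ℕ)
    · rw [if_pos h, if_pos (by ext; simp only [Fin.revPerm_apply, Fin.val_rev]; omega), mul_one]
    · rw [if_neg h, if_neg (by intro hEq; apply h; rw [← hEq]; simp only [Fin.revPerm_apply, Fin.val_rev]; omega), mul_zero]
  rw [hN, Matrix.det_mul, Matrix.det_diagonal, Matrix.det_permutation, sign_revPerm]
  have h1 : ∏ k : Fin n, (-1 : K) ^ (k : ℕ) = (-1 : K) ^ (n * (n - 1) / 2) := by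
    rw [Finset.prod_pow_eq_pow_sum]
    congr 1
    rw [Fin.sum_univ_eq_sum_range (fun j => j) n, Finset.sum_range_id]
  rw [h1]
  push_cast
  rw [← pow_add, ← two_mul, pow_mul]
  norm_num
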